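/- Let T ∈ (0, ∞], let L : [0,T) → (4×4 real matrices) be continuous with every L(t) lower triangular (i.e. L(t)_{kl} = 0 whenever k < l), and let μ : [0,T) → Λ²(ℝ⁴)*⊗ℝ⁴ be a differentiable solution of the linear ODE μ'(t) = (1/2)·π(L(t))·μ(t). If the components of μ(0) in the standard basis satisfy μ_{ij}^k(0) = 0 for every triple (i,j,k) with i < j and (i,j,k) ∉ {(1,2,3), (1,2,4), (1,3,4)}, then for every t ∈ [0,T) the components of μ(t) satisfy the same vanishing: μ_{ij}^k(t) = 0 for all i < j with (i,j,k) ∉ {(1,2,3), (1,2,4), (1,3,4)}. -/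

import Mathlib

open Set

/-- The "good" (possibly nonzero) unordered component triples. -/
def goodB (i j k : Fin 4) : Bool :=
  decide ((i,j,k) = ((0:Fin 4),(1:Fin 4),(2:Fin 4)) ∨ (i,j,k) = ((0:Fin 4),(1:Fin 4),(3:Fin 4)) ∨
    (i,j,k) = ((0:Fin 4),(2:Fin 4),(3:Fin 4)) ∨ (j,i,k) = ((0:Fin 4),(1:Fin 4),(2:Fin 4)) ∨
    (j,i,k) = ((0:Fin 4),(1:Fin 4),(3:Fin 4)) ∨ (j,i,k) = ((0:Fin 4),(2:Fin 4),(3:Fin 4)))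

/-- The "bad" (forced to vanish) component triples. -/
def badB (i j k : Fin 4) : Bool := !goodB i j k && decide (i ≠ j)

lemma badB_l_le_k : ∀ i j k l : Fin 4, badB i j k = true → l ≤ k → badB i j l = true := by decide
lemma badB_i_le_l : ∀ i j k l : Fin 4, badB i j k = true → i ≤ l → l ≠ j → badB l j k = true := by
  decide
lemma badB_j_le_l : ∀ i j k l : Fin 4, badB i j k = true → j ≤ l → l ≠ i → badB i l k = true := by
  decide
lemma badB_ne : ∀ i j k : Fin 4, badB i j k = true → i ≠ j := by decide
lemma badB_of_pattern : ∀ i j k : Fin 4, i < j →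
      (i, j, k) ≠ ((0 : Fin 4), (1 : Fin 4), (2 : Fin 4)) →
      (i, j, k) ≠ ((0 : Fin 4), (1 : Fin 4), (3 : Fin 4)) →
      (i, j, k) ≠ ((0 : Fin 4), (2 : Fin 4), (3 : Fin 4)) → badB i j k = true := by decide
lemma pattern_of_badB_lt : ∀ i j k : Fin 4, badB i j k = true → i < j →
      (i, j, k) ≠ ((0 : Fin 4), (1 : Fin 4), (2 : Fin 4)) ∧
      (i, j, k) ≠ ((0 : Fin 4), (1 : Fin 4), (3 : Fin 4)) ∧
      (i, j, k) ≠ ((0 : Fin 4), (2 : Fin 4), (3 : Fin 4)) := by decide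
lemma pattern_of_badB_gt : ∀ i j k : Fin 4, badB i j k = true → j < i →
      (j, i, k) ≠ ((0 : Fin 4), (1 : Fin 4), (2 : Fin 4)) ∧
      (j, i, k) ≠ ((0 : Fin 4), (1 : Fin 4), (3 : Fin 4)) ∧
      (j, i, k) ≠ ((0 : Fin 4), (2 : Fin 4), (3 : Fin 4)) := by decide

/-- Truncated coefficient matrix. -/
noncomputable def LcAux (L : ℝ → Matrix (Fin 4) (Fin 4) ℝ) (t u : ℝ) :
    Matrix (Fin 4) (Fin 4) ℝ :=
  if 0 ≤ u ∧ u ≤ t then L u else 0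

/-- The vector field of the restricted linear ODE on the bad components. -/
noncomputable def vAux (L : ℝ → Matrix (Fin 4) (Fin 4) ℝ) (t u : ℝ)
    (x : Fin 4 → Fin 4 → Fin 4 → ℝ) : Fin 4 → Fin 4 → Fin 4 → ℝ :=
  fun i j k => if badB i j k then
    (1/2) * ∑ l : Fin 4,
      (LcAux L t u k l * x i j l - LcAux L t u l i * x l j k - LcAux L t u l j * x i l k)
  else 0

/-- The bad part of `μ`. -/
noncomputable def bAux (μ : ℝ → Fin 4 → Fin 4 → Fin 4 → ℝ) (u : ℝ) :
    Fin 4 → Fin 4 → Fin 4 → ℝ :=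
  fun i j k => if badB i j k then μ u i j k else 0

theorem gauged_flow_preserves_structure (T : EReal) (hT : 0 < T)
    (L : ℝ → Matrix (Fin 4) (Fin 4) ℝ)
    (hLcont : ContinuousOn L {t : ℝ | 0 ≤ t ∧ (t : EReal) < T})
    (hLtri : ∀ t : ℝ, 0 ≤ t → (t : EReal) < T → ∀ k l : Fin 4, k < l → L t k l = 0)
    (μ : ℝ → Fin 4 → Fin 4 → Fin 4 → ℝ)
    (hanti : ∀ (t : ℝ) (i j k : Fin 4), μ t i j k = -μ t j i k)
    (hode : ∀ t : ℝ, 0 ≤ t → (t : EReal) < T → ∀ i j k : Fin 4,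
      HasDerivAt (fun s => μ s i j k)
        ((1/2) * ∑ l : Fin 4,
          (L t k l * μ t i j l - L t l i * μ t l j k - L t l j * μ t i l k)) t)
    (hinit : ∀ i j k : Fin 4, i < j →
      (i, j, k) ≠ ((0 : Fin 4), (1 : Fin 4), (2 : Fin 4)) →
      (i, j, k) ≠ ((0 : Fin 4), (1 : Fin 4), (3 : Fin 4)) →
      (i, j, k) ≠ ((0 : Fin 4), (2 : Fin 4), (3 : Fin 4)) → μ 0 i j k = 0) :
    ∀ t : ℝ, 0 ≤ t → (t : EReal) < T → ∀ i j k : Fin 4, i < j →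
      (i, j, k) ≠ ((0 : Fin 4), (1 : Fin 4), (2 : Fin 4)) →
      (i, j, k) ≠ ((0 : Fin 4), (1 : Fin 4), (3 : Fin 4)) →
      (i, j, k) ≠ ((0 : Fin 4), (2 : Fin 4), (3 : Fin 4)) → μ t i j k = 0 := by
  intro t ht htT i j k hij h1 h2 h3
  -- the diagonal components of μ vanish
  have hdiag : ∀ (u : ℝ) (a c : Fin 4), μ u a a c = 0 := by
    intro u a c
    have := hanti u a a c
    linarith
  -- [0, t] lies in the domain
  have hsub : ∀ u : ℝ, 0 ≤ u → u ≤ t → 0 ≤ u ∧ (u : EReal) < T := by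
    intro u hu0 hut
    exact ⟨hu0, lt_of_le_of_lt (EReal.coe_le_coe_iff.mpr hut) htT⟩
  -- bound the entries of L on [0, t]
  have hent : ∀ a b : Fin 4, ∃ C : ℝ, ∀ u ∈ Icc (0:ℝ) t, |L u a b| ≤ C := by
    intro a b
    have hc : ContinuousOn (fun u => L u a b) (Icc (0:ℝ) t) := by
      apply (continuous_apply b).comp_continuousOn
      apply (continuous_apply a).comp_continuousOn
      exact hLcont.mono (fun u hu => hsub u hu.1 hu.2)
    obtain ⟨C, hC⟩ := isCompact_Icc.exists_bound_of_continuousOn hc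
    exact ⟨C, fun u hu => by simpa [Real.norm_eq_abs] using hC u hu⟩
  choose Cf hCf using hent
  set C : ℝ := ∑ a : Fin 4, ∑ b : Fin 4, |Cf a b| with hCdef
  have hC0 : 0 ≤ C := Finset.sum_nonneg fun a _ => Finset.sum_nonneg fun b _ => abs_nonneg _
  have hC : ∀ u ∈ Icc (0:ℝ) t, ∀ a b : Fin 4, |L u a b| ≤ C := by
    intro u hu a b
    refine le_trans (hCf a b u hu) (le_trans (le_abs_self _) ?_)
    calc |Cf a b| ≤ ∑ b' : Fin 4, |Cf a b'| :=
          Finset.single_le_sum (fun b' _ => abs_nonneg (Cf a b')) (Finset.mem_univ b)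
      _ ≤ C := Finset.single_le_sum
          (fun a' _ => Finset.sum_nonneg fun b' _ => abs_nonneg (Cf a' b'))
          (Finset.mem_univ a)
  -- bound on truncated matrix entries, for all times
  have hLc : ∀ (u : ℝ) (a b : Fin 4), |LcAux L t u a b| ≤ C := by
    intro u a b
    by_cases h : 0 ≤ u ∧ u ≤ t
    · rw [LcAux, if_pos h]; exact hC u ⟨h.1, h.2⟩ a b
    · rw [LcAux, if_neg h]; simpa using hC0
  -- the vector field is Lipschitz
  have hbound : ∀ (u : ℝ) (x y : Fin 4 → Fin 4 → Fin 4 → ℝ) (i j k : Fin 4),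
      |vAux L t u x i j k - vAux L t u y i j k| ≤ 6 * C * ‖x - y‖ := by
    intro u x y i j k
    have hcomp : ∀ a b c : Fin 4, |x a b c - y a b c| ≤ ‖x - y‖ := by
      intro a b c
      have h1 : ‖(x - y) a b c‖ ≤ ‖(x - y) a b‖ := norm_le_pi_norm ((x - y) a b) c
      have h2 : ‖(x - y) a b‖ ≤ ‖(x - y) a‖ := norm_le_pi_norm ((x - y) a) b
      have h3 : ‖(x - y) a‖ ≤ ‖x - y‖ := norm_le_pi_norm (x - y) a
      simpa [Real.norm_eq_abs] using le_trans h1 (le_trans h2 h3)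
    by_cases hB : badB i j k
    · rw [vAux, vAux, if_pos hB, if_pos hB, ← mul_sub, ← Finset.sum_sub_distrib]
      rw [abs_mul]
      have habs : |(1:ℝ)/2| = 1/2 := by norm_num
      rw [habs]
      have hsum : |∑ l : Fin 4,
          ((LcAux L t u k l * x i j l - LcAux L t u l i * x l j k - LcAux L t u l j * x i l k) -
           (LcAux L t u k l * y i j l - LcAux L t u l i * y l j k - LcAux L t u l j * y i l k))|
          ≤ ∑ l : Fin 4, (3 * (C * ‖x - y‖)) := by
        refine le_trans (Finset.abs_sum_le_sum_abs _ _) (Finset.sum_le_sum fun l _ => ?_)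
        have e : (LcAux L t u k l * x i j l - LcAux L t u l i * x l j k -
              LcAux L t u l j * x i l k) -
            (LcAux L t u k l * y i j l - LcAux L t u l i * y l j k -
              LcAux L t u l j * y i l k)
            = LcAux L t u k l * (x i j l - y i j l) - LcAux L t u l i * (x l j k - y l j k)
              - LcAux L t u l j * (x i l k - y i l k) := by ring
        rw [e]
        have b1 : |LcAux L t u k l * (x i j l - y i j l)| ≤ C * ‖x - y‖ := by
          rw [abs_mul]
          exact mul_le_mul (hLc u k l) (hcomp i j l) (abs_nonneg _) hC0
        have b2 : |LcAux L t u l i * (x l j k - y l j k)| ≤ C * ‖x - y‖ := by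
          rw [abs_mul]
          exact mul_le_mul (hLc u l i) (hcomp l j k) (abs_nonneg _) hC0
        have b3 : |LcAux L t u l j * (x i l k - y i l k)| ≤ C * ‖x - y‖ := by
          rw [abs_mul]
          exact mul_le_mul (hLc u l j) (hcomp i l k) (abs_nonneg _) hC0
        calc |LcAux L t u k l * (x i j l - y i j l) - LcAux L t u l i * (x l j k - y l j k)
              - LcAux L t u l j * (x i l k - y i l k)|
            ≤ |LcAux L t u k l * (x i j l - y i j l) - LcAux L t u l i * (x l j k - y l j k)|
              + |LcAux L t u l j * (x i l k - y i l k)| := abs_sub _ _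
          _ ≤ |LcAux L t u k l * (x i j l - y i j l)| + |LcAux L t u l i * (x l j k - y l j k)|
              + |LcAux L t u l j * (x i l k - y i l k)| := by
                have := abs_sub (LcAux L t u k l * (x i j l - y i j l))
                  (LcAux L t u l i * (x l j k - y l j k))
                linarith
          _ ≤ 3 * (C * ‖x - y‖) := by linarith
      have : (∑ _l : Fin 4, (3 * (C * ‖x - y‖))) = 12 * (C * ‖x - y‖) := by
        simp [Finset.sum_const]; ring
      rw [this] at hsum
      nlinarith [hsum]
    · rw [vAux, vAux, if_neg hB, if_neg hB]
      simp only [sub_zero, abs_zero]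
      positivity
  have hlip : ∀ u : ℝ, LipschitzWith (Real.toNNReal (6 * C)) (vAux L t u) := by
    intro u
    apply LipschitzWith.of_dist_le_mul
    intro x y
    rw [dist_eq_norm, dist_eq_norm]
    have hcoe : ((Real.toNNReal (6 * C) : NNReal) : ℝ) = 6 * C :=
      Real.coe_toNNReal _ (by positivity)
    rw [hcoe]
    rw [pi_norm_le_iff_of_nonneg (by positivity)]
    intro i
    rw [pi_norm_le_iff_of_nonneg (by positivity)]
    intro j
    rw [pi_norm_le_iff_of_nonneg (by positivity)]
    intro k
    simpa [Real.norm_eq_abs] using hbound u x y i j k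
  -- b := bad part of μ solves the ODE
  have hb' : ∀ u ∈ Ico (0:ℝ) t, HasDerivAt (bAux μ) (vAux L t u (bAux μ u)) u := by
    intro u hu
    obtain ⟨hu0, hut⟩ := hu
    obtain ⟨-, huT⟩ := hsub u hu0 (le_of_lt hut)
    rw [hasDerivAt_pi]; intro i
    rw [hasDerivAt_pi]; intro j
    rw [hasDerivAt_pi]; intro k
    by_cases hB : badB i j k
    · have heq : (fun s => bAux μ s i j k) = fun s => μ s i j k := by
        funext s; simp [bAux, hB]
      have hval : vAux L t u (bAux μ u) i j k =
          (1/2) * ∑ l : Fin 4,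
            (L u k l * μ u i j l - L u l i * μ u l j k - L u l j * μ u i l k) := by
        rw [vAux, if_pos hB]
        congr 1
        apply Finset.sum_congr rfl
        intro l _
        have hLcu : ∀ a b : Fin 4, LcAux L t u a b = L u a b := by
          intro a b; rw [LcAux, if_pos ⟨hu0, le_of_lt hut⟩]
        rw [hLcu, hLcu, hLcu]
        have e1 : L u k l * bAux μ u i j l = L u k l * μ u i j l := by
          rcases eq_or_ne (L u k l) 0 with h | h
          · rw [h, zero_mul, zero_mul]
          · have hlk : l ≤ k := not_lt.mp fun hc => h (hLtri u hu0 huT k l hc)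
            rw [bAux, if_pos (badB_l_le_k i j k l hB hlk)]
        have e2 : L u l i * bAux μ u l j k = L u l i * μ u l j k := by
          rcases eq_or_ne (L u l i) 0 with h | h
          · rw [h, zero_mul, zero_mul]
          · have hil : i ≤ l := not_lt.mp fun hc => h (hLtri u hu0 huT l i hc)
            rcases eq_or_ne l j with rfl | hlj
            · rw [hdiag]
              have : badB l l k = false := by
                have := badB_ne l l k
                by_contra hc
                exact (this (by simpa using hc)) rfl
              rw [bAux, this]
              simp
            · rw [bAux, if_pos (badB_i_le_l i j k l hB hil hlj)]
        have e3 : L u l j * bAux μ u i l k = L u l j * μ u i l k := by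
          rcases eq_or_ne (L u l j) 0 with h | h
          · rw [h, zero_mul, zero_mul]
          · have hjl : j ≤ l := not_lt.mp fun hc => h (hLtri u hu0 huT l j hc)
            rcases eq_or_ne l i with rfl | hli
            · rw [hdiag]
              have : badB l l k = false := by
                have := badB_ne l l k
                by_contra hc
                exact (this (by simpa using hc)) rfl
              rw [bAux, this]
              simp
            · rw [bAux, if_pos (badB_j_le_l i j k l hB hjl hli)]
        rw [e1, e2, e3]
      rw [heq, hval]
      exact hode u hu0 huT i j k
    · have heq : (fun s => bAux μ s i j k) = fun _ => (0:ℝ) := by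
        funext s; simp [bAux, hB]
      have hval : vAux L t u (bAux μ u) i j k = 0 := by rw [vAux, if_neg hB]
      rw [heq, hval]
      exact hasDerivAt_const u 0
  -- continuity of b on [0, t]
  have hbcont : ContinuousOn (bAux μ) (Icc (0:ℝ) t) := by
    intro u hu
    apply ContinuousAt.continuousWithinAt
    obtain ⟨hu0, huT⟩ := hsub u hu.1 hu.2
    rw [continuousAt_pi]; intro i
    rw [continuousAt_pi]; intro j
    rw [continuousAt_pi]; intro k
    by_cases hB : badB i j k
    · have heq : (fun s => bAux μ s i j k) = fun s => μ s i j k := by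
        funext s; simp [bAux, hB]
      have : ContinuousAt (fun s => μ s i j k) u := (hode u hu0 huT i j k).continuousAt
      exact heq ▸ this
    · have heq : (fun s => bAux μ s i j k) = fun _ => (0:ℝ) := by
        funext s; simp [bAux, hB]
      exact heq ▸ continuousAt_const
  -- initial value vanishes
  have hb0 : bAux μ 0 = fun _ _ _ => (0:ℝ) := by
    funext a b c
    rw [bAux]
    by_cases hB : badB a b c
    · rw [if_pos hB]
      rcases lt_trichotomy a b with hab | rfl | hab
      · obtain ⟨n1, n2, n3⟩ := pattern_of_badB_lt a b c hB hab
        exact hinit a b c hab n1 n2 n3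
      · exact hdiag 0 a c
      · obtain ⟨n1, n2, n3⟩ := pattern_of_badB_gt a b c hB hab
        rw [hanti 0 a b c, hinit b a c hab n1 n2 n3, neg_zero]
    · rw [if_neg hB]
  -- uniqueness of ODE solutions: b ≡ 0 on [0, t]
  have huniq : EqOn (bAux μ) (fun _ _ _ _ => (0:ℝ)) (Icc (0:ℝ) t) := by
    apply ODE_solution_unique_of_mem_Icc_right
      (v := vAux L t) (K := Real.toNNReal (6 * C)) (s := fun _ => univ)
    · intro u _
      exact (hlip u).lipschitzOnWith
    · exact hbcont
    · intro u hu
      exact (hb' u hu).hasDerivWithinAt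
    · intro u _
      exact mem_univ _
    · exact continuousOn_const
    · intro u hu
      have : vAux L t u (fun _ _ _ => (0:ℝ)) = fun _ _ _ => (0:ℝ) := by
        funext a b c
        rw [vAux]
        by_cases hB : badB a b c
        · rw [if_pos hB]; simp
        · rw [if_neg hB]
      rw [this]
      exact (hasDerivAt_const u _).hasDerivWithinAt
    · intro u _
      exact mem_univ _
    · exact hb0
  have hmem : t ∈ Icc (0:ℝ) t := ⟨ht, le_refl t⟩
  have := congrFun (congrFun (congrFun (huniq hmem) i) j) k
  rw [bAux, if_pos (badB_of_pattern i j k hij h1 h2 h3)] at this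
  exact this
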